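/- The PMC-GD pseudo-reward is an upper bound: for any round with empirical means p̂, the pseudo-reward r̄(π;p̃) = r(π;p̂) + ∑_{u∈π} ‖p̃(u,·) − p̂(u,·)‖₁ satisfies r̄(π;p) ≥ r(π;p) for every action π ⊆ U and parameter p, where r(π;p) = ∑_{v∈V}(1 − ∏_{u∈π}(1 − p(u,v))). -/

import Mathlib

lemma prod_sub_prod_le_sum_abs {U : Type*} (s : Finset U) (a b : U → ℝ)
    (ha : ∀ u, a u ∈ Set.Icc (0:ℝ) 1) (hb : ∀ u, b u ∈ Set.Icc (0:ℝ) 1) :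
    (∏ u ∈ s, b u) - (∏ u ∈ s, a u) ≤ ∑ u ∈ s, |a u - b u| := by
  induction s using Finset.cons_induction with
  | empty => simp
  | cons u s hu ih =>
    rw [Finset.prod_cons, Finset.prod_cons, Finset.sum_cons]
    have hA : (0:ℝ) ≤ ∏ x ∈ s, a x := Finset.prod_nonneg fun x _ => (ha x).1
    have hA1 : (∏ x ∈ s, a x) ≤ 1 := Finset.prod_le_one (fun x _ => (ha x).1) (fun x _ => (ha x).2)
    have hB : (0:ℝ) ≤ ∏ x ∈ s, b x := Finset.prod_nonneg fun x _ => (hb x).1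
    have hB1 : (∏ x ∈ s, b x) ≤ 1 := Finset.prod_le_one (fun x _ => (hb x).1) (fun x _ => (hb x).2)
    have key : b u * ∏ x ∈ s, b x - a u * ∏ x ∈ s, a x
        = (b u - a u) * ∏ x ∈ s, b x + a u * ((∏ x ∈ s, b x) - ∏ x ∈ s, a x) := by ring
    rw [key]
    have h1 : (b u - a u) * ∏ x ∈ s, b x ≤ |a u - b u| := by
      calc (b u - a u) * ∏ x ∈ s, b x ≤ |b u - a u| * 1 :=
            mul_le_mul (le_abs_self _) hB1 hB (abs_nonneg _)
        _ = |a u - b u| := by rw [mul_one, abs_sub_comm]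
    have hsum : (0:ℝ) ≤ ∑ x ∈ s, |a x - b x| := Finset.sum_nonneg fun x _ => abs_nonneg _
    have h2 : a u * ((∏ x ∈ s, b x) - ∏ x ∈ s, a x) ≤ ∑ x ∈ s, |a x - b x| := by
      rcases le_or_gt 0 ((∏ x ∈ s, b x) - ∏ x ∈ s, a x) with h | h
      · nlinarith [(ha u).1, (ha u).2]
      · nlinarith [(ha u).1, (ha u).2]
    linarith

theorem pmc_pseudo_reward_upper_bound {U V : Type*} [Fintype U] [Fintype V]
    (p phat : U → V → ℝ)
    (hp : ∀ u v, p u v ∈ Set.Icc (0:ℝ) 1)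
    (hphat : ∀ u v, phat u v ∈ Set.Icc (0:ℝ) 1)
    (π : Finset U) :
    (∑ v : V, (1 - ∏ u ∈ π, (1 - p u v))) ≤
      (∑ v : V, (1 - ∏ u ∈ π, (1 - phat u v))) +
        ∑ u ∈ π, ∑ v : V, |p u v - phat u v| := by
  rw [Finset.sum_comm]
  rw [← Finset.sum_add_distrib]
  apply Finset.sum_le_sum
  intro v _
  have := prod_sub_prod_le_sum_abs π (fun u => 1 - p u v) (fun u => 1 - phat u v)
    (fun u => ⟨by show (0:ℝ) ≤ 1 - p u v; linarith [(hp u v).2],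
               by show (1:ℝ) - p u v ≤ 1; linarith [(hp u v).1]⟩)
    (fun u => ⟨by show (0:ℝ) ≤ 1 - phat u v; linarith [(hphat u v).2],
               by show (1:ℝ) - phat u v ≤ 1; linarith [(hphat u v).1]⟩)
  have heq : ∀ u ∈ π, |(1 - p u v) - (1 - phat u v)| = |p u v - phat u v| := by
    intro u _; rw [abs_sub_comm]; ring_nf
  rw [Finset.sum_congr rfl heq] at this
  linarith
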